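/- Let P_n be the path on n ≥ 5 vertices. Then α_{0-reg}(P_n) = ⌈(n−2)/2⌉; α_{1-reg}(P_n) = n − m, where m = ⌊(n−2)/3⌋ + 2 (equivalently, α_{1-reg}(P_n) = n − 2 − ⌊(n−2)/3⌋); and α_{k-reg}(P_n) = n − 2 for every k ≥ 2. -/

import Mathlib

open SimpleGraph
open Fin.NatCast

/-- The degree of a vertex `v` in `G`: the number of neighbors of `v`. -/
noncomputable def degN {V : Type*} (G : SimpleGraph V) (v : V) : ℕ := {u | G.Adj v u}.ncard

/-- A set of vertices is `k`-independent if the induced subgraph has maximum degree at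
most `k`, i.e. every vertex of the set has at most `k` neighbors inside the set. -/
def IsKIndepSet {V : Type*} (G : SimpleGraph V) (k : ℕ) (S : Set V) : Prop :=
  ∀ v ∈ S, {u | u ∈ S ∧ G.Adj v u}.ncard ≤ k

/-- A set of vertices is regular if all its vertices have the same degree in `G`. -/
def IsRegularSet {V : Type*} (G : SimpleGraph V) (S : Set V) : Prop :=
  ∀ u ∈ S, ∀ v ∈ S, degN G u = degN G v

/-- The regular `k`-independence number `α_{k-reg}(G)`: the maximum cardinality of a set
of vertices that is both `k`-independent and regular. -/
noncomputable def regKIndepNum {V : Type*} (G : SimpleGraph V) (k : ℕ) : ℕ :=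
  sSup {m : ℕ | ∃ S : Set V, S.ncard = m ∧ IsKIndepSet G k S ∧ IsRegularSet G S}

lemma degN_end {n : ℕ} (hn : 5 ≤ n) (v : Fin n) (hv : v.val = 0 ∨ v.val = n - 1) :
    degN (pathGraph n) v = 1 := by
  rcases hv with hv | hv
  · have : {u : Fin n | (pathGraph n).Adj v u} = {⟨1, by omega⟩} := by
      ext u
      simp only [Set.mem_setOf_eq, pathGraph_adj, Set.mem_singleton_iff, hv]
      constructor
      · rintro (h | h)
        · exact Fin.ext (by simp only []; omega)
        · omega
      · rintro rfl; left; simp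
    rw [degN, this, Set.ncard_singleton]
  · have : {u : Fin n | (pathGraph n).Adj v u} = {⟨n - 2, by omega⟩} := by
      ext u
      simp only [Set.mem_setOf_eq, pathGraph_adj, Set.mem_singleton_iff, hv]
      constructor
      · rintro (h | h)
        · omega
        · exact Fin.ext (by simp only []; omega)
      · rintro rfl; right; simp only []; omega
    rw [degN, this, Set.ncard_singleton]

lemma degN_mid {n : ℕ} (hn : 5 ≤ n) (v : Fin n) (hv : 0 < v.val ∧ v.val < n - 1) :
    degN (pathGraph n) v = 2 := by
  have hvn : v.val < n := v.isLt
  have : {u : Fin n | (pathGraph n).Adj v u} =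
      {⟨v.val - 1, by omega⟩, ⟨v.val + 1, by omega⟩} := by
    ext u
    simp only [Set.mem_setOf_eq, pathGraph_adj, Set.mem_insert_iff, Set.mem_singleton_iff]
    constructor
    · rintro (h | h)
      · right; exact Fin.ext (by simp only []; omega)
      · left; exact Fin.ext (by simp only []; omega)
    · rintro (rfl | rfl)
      · right; simp only []; omega
      · left; simp only []
  rw [degN, this, Set.ncard_pair (by intro h; have := congrArg Fin.val h; simp only [] at this; omega)]

lemma regnum_eq {V : Type*} [Fintype V] (G : SimpleGraph V) (k t : ℕ)
    (hex : ∃ S : Set V, S.ncard = t ∧ IsKIndepSet G k S ∧ IsRegularSet G S)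
    (hub : ∀ S : Set V, IsKIndepSet G k S → IsRegularSet G S → S.ncard ≤ t) :
    regKIndepNum G k = t := by
  apply le_antisymm
  · apply csSup_le ⟨t, hex⟩
    rintro m ⟨S, rfl, hi, hr⟩
    exact hub S hi hr
  · refine le_csSup ⟨Fintype.card V, ?_⟩ hex
    rintro m ⟨S, rfl, _, _⟩
    calc S.ncard ≤ (Set.univ : Set V).ncard :=
          Set.ncard_le_ncard (Set.subset_univ S) Set.finite_univ
      _ = Fintype.card V := by rw [Set.ncard_univ, Nat.card_eq_fintype_card]

lemma ncard_val_image {n : ℕ} (S : Set (Fin n)) : (Fin.val '' S).ncard = S.ncard :=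
  Set.ncard_image_of_injective _ Fin.val_injective

lemma ncard_interior {n : ℕ} (hn : 5 ≤ n) :
    {v : Fin n | 0 < v.val ∧ v.val < n - 1}.ncard = n - 2 := by
  have himg : Fin.val '' {v : Fin n | 0 < v.val ∧ v.val < n - 1} = Set.Ioo 0 (n - 1) := by
    ext m
    simp only [Set.mem_image, Set.mem_setOf_eq, Set.mem_Ioo]
    constructor
    · rintro ⟨v, ⟨h1, h2⟩, rfl⟩; exact ⟨h1, h2⟩
    · rintro ⟨h1, h2⟩; exact ⟨⟨m, by omega⟩, ⟨h1, h2⟩, rfl⟩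
  rw [← ncard_val_image, himg, ← Finset.coe_Ioo, Set.ncard_coe_finset, Nat.card_Ioo]
  omega

lemma dichotomy {n : ℕ} (hn : 5 ≤ n) (S : Set (Fin n))
    (hr : IsRegularSet (pathGraph n) S) :
    S.ncard ≤ 2 ∨ ∀ v ∈ S, 0 < v.val ∧ v.val < n - 1 := by
  by_cases h : ∀ v ∈ S, v.val = 0 ∨ v.val = n - 1
  · left
    have hsub : S ⊆ {(⟨0, by omega⟩ : Fin n), ⟨n - 1, by omega⟩} := by
      intro v hv
      rcases h v hv with h1 | h1
      · left; exact Fin.ext h1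
      · right; exact Fin.ext h1
    calc S.ncard ≤ ({(⟨0, by omega⟩ : Fin n), ⟨n - 1, by omega⟩} : Set (Fin n)).ncard :=
          Set.ncard_le_ncard hsub (Set.toFinite _)
      _ ≤ 2 := by
          refine Set.ncard_insert_le _ _ |>.trans ?_
          simp [Set.ncard_singleton]
  · right
    push_neg at h
    obtain ⟨w, hw, hw0, hw1⟩ := h
    intro v hv
    by_contra hc
    push_neg at hc
    have h1 : degN (pathGraph n) v = 1 := degN_end hn v (by omega)
    have h2 : degN (pathGraph n) w = 2 := degN_mid hn w ⟨by omega, by omega⟩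
    have := hr v hv w hw
    omega

lemma indep_zero_empty {n : ℕ} (S : Set (Fin n)) (hi : IsKIndepSet (pathGraph n) 0 S)
    {u v : Fin n} (hu : u ∈ S) (hv : v ∈ S) (hadj : (pathGraph n).Adj u v) : False := by
  have h := hi u hu
  have h0 : {x | x ∈ S ∧ (pathGraph n).Adj u x} = ∅ := by
    rw [← Set.ncard_eq_zero (Set.toFinite _)]
    omega
  have : v ∈ ({} : Set (Fin n)) := h0 ▸ (⟨hv, hadj⟩ : v ∈ {x | x ∈ S ∧ (pathGraph n).Adj u x})
  exact this

-- Upper bound for 0-independent subsets of the interior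
lemma ub0 {n : ℕ} (hn : 5 ≤ n) (S : Set (Fin n)) (hi : IsKIndepSet (pathGraph n) 0 S)
    (hint : ∀ v ∈ S, 0 < v.val ∧ v.val < n - 1) : S.ncard ≤ (n - 2 + 1) / 2 := by
  have h := Set.ncard_le_ncard_of_injOn (fun v : Fin n => (v.val - 1) / 2)
    (t := Set.Iio ((n - 2 + 1) / 2))
    (fun v hv => by
      have := hint v hv
      simp only [Set.mem_Iio]
      omega)
    (by
      intro u hu v hv hEq
      have hEq' : (u.val - 1) / 2 = (v.val - 1) / 2 := hEq
      have hu' := hint u hu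
      have hv' := hint v hv
      by_contra hne
      have hne' : u.val ≠ v.val := fun h => hne (Fin.ext h)
      have hadj : (pathGraph n).Adj u v := by
        rw [pathGraph_adj]; omega
      exact indep_zero_empty S hi hu hv hadj)
    (Set.finite_Iio _)
  rwa [← Finset.coe_Iio, Set.ncard_coe_finset, Nat.card_Iio] at h

-- Upper bound for 1-independent subsets of the interior
lemma ub1 {n : ℕ} (hn : 5 ≤ n) (S : Set (Fin n)) (hi : IsKIndepSet (pathGraph n) 1 S)
    (hint : ∀ v ∈ S, 0 < v.val ∧ v.val < n - 1) : S.ncard ≤ n - 2 - (n - 2) / 3 := by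
  haveI : NeZero n := ⟨by omega⟩
  set q := (n - 2) / 3 with hq
  set I : Set (Fin n) := {v : Fin n | 0 < v.val ∧ v.val < n - 1} with hI
  have hSI : S ⊆ I := fun v hv => hint v hv
  have hblock : ∀ i < q, ∃ m : ℕ, 3 * i + 1 ≤ m ∧ m ≤ 3 * i + 3 ∧ ((m : Fin n) ∉ S) := by
    intro i hi'
    have hb : 3 * i + 3 ≤ n - 2 := by omega
    by_contra hc
    push_neg at hc
    have h1 : ((3 * i + 1 : ℕ) : Fin n) ∈ S := hc _ (by omega) (by omega)
    have h2 : ((3 * i + 2 : ℕ) : Fin n) ∈ S := hc _ (by omega) (by omega)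
    have h3 : ((3 * i + 3 : ℕ) : Fin n) ∈ S := hc _ (by omega) (by omega)
    have hv1 : ((3 * i + 1 : ℕ) : Fin n).val = 3 * i + 1 := Fin.val_cast_of_lt (by omega)
    have hv2 : ((3 * i + 2 : ℕ) : Fin n).val = 3 * i + 2 := Fin.val_cast_of_lt (by omega)
    have hv3 : ((3 * i + 3 : ℕ) : Fin n).val = 3 * i + 3 := Fin.val_cast_of_lt (by omega)
    have hpair : ({((3 * i + 1 : ℕ) : Fin n), ((3 * i + 3 : ℕ) : Fin n)} : Set (Fin n)) ⊆
        {u | u ∈ S ∧ (pathGraph n).Adj ((3 * i + 2 : ℕ) : Fin n) u} := by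
      rintro u (rfl | rfl)
      · exact ⟨h1, by rw [pathGraph_adj, hv1, hv2]; omega⟩
      · exact ⟨h3, by rw [pathGraph_adj, hv3, hv2]; omega⟩
    have hle := Set.ncard_le_ncard hpair (Set.toFinite _)
    rw [Set.ncard_pair (by
      intro h
      have h' := congrArg Fin.val h
      rw [hv1, hv3] at h'
      omega)] at hle
    have := hi _ h2
    omega
  choose g hg1 hg2 hg3 using hblock
  have hcard : (Set.Iio q).ncard ≤ (I \ S).ncard := by
    apply Set.ncard_le_ncard_of_injOn
      (fun i => if h : i < q then ((g i h : ℕ) : Fin n) else 0)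
    · intro i hi'
      simp only [Set.mem_Iio] at hi'
      simp only [dif_pos hi']
      have hb : 3 * i + 3 ≤ n - 2 := by omega
      have hval : ((g i hi' : ℕ) : Fin n).val = g i hi' :=
        Fin.val_cast_of_lt (by have := hg1 i hi'; have := hg2 i hi'; omega)
      refine ⟨?_, hg3 i hi'⟩
      simp only [hI, Set.mem_setOf_eq, hval]
      have := hg1 i hi'; have := hg2 i hi'
      omega
    · intro i hi' j hj' hEq
      simp only [Set.mem_Iio] at hi' hj'
      simp only [dif_pos hi', dif_pos hj'] at hEq
      have hvi : ((g i hi' : ℕ) : Fin n).val = g i hi' :=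
        Fin.val_cast_of_lt (by have := hg1 i hi'; have := hg2 i hi'; omega)
      have hvj : ((g j hj' : ℕ) : Fin n).val = g j hj' :=
        Fin.val_cast_of_lt (by have := hg1 j hj'; have := hg2 j hj'; omega)
      have hEq' := congrArg Fin.val hEq
      rw [hvi, hvj] at hEq'
      have := hg1 i hi'; have := hg2 i hi'; have := hg1 j hj'; have := hg2 j hj'
      omega
  rw [← Finset.coe_Iio, Set.ncard_coe_finset, Nat.card_Iio] at hcard
  have hsum := Set.ncard_diff_add_ncard_of_subset hSI (Set.toFinite _)
  have hIcard : I.ncard = n - 2 := ncard_interior hn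
  omega

lemma ex0 {n : ℕ} (hn : 5 ≤ n) : ∃ S : Set (Fin n), S.ncard = (n - 2 + 1) / 2 ∧
    IsKIndepSet (pathGraph n) 0 S ∧ IsRegularSet (pathGraph n) S := by
  haveI : NeZero n := ⟨by omega⟩
  refine ⟨(fun j : ℕ => ((2 * j + 1 : ℕ) : Fin n)) '' Set.Iio ((n - 2 + 1) / 2), ?_, ?_, ?_⟩
  · have hinj : Set.InjOn (fun j : ℕ => ((2 * j + 1 : ℕ) : Fin n)) (Set.Iio ((n - 2 + 1) / 2)) := by
      intro i hi j hj hEq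
      simp only [Set.mem_Iio] at hi hj
      have h1 : ((2 * i + 1 : ℕ) : Fin n).val = 2 * i + 1 := Fin.val_cast_of_lt (by omega)
      have h2 : ((2 * j + 1 : ℕ) : Fin n).val = 2 * j + 1 := Fin.val_cast_of_lt (by omega)
      have hEq2 : ((2 * i + 1 : ℕ) : Fin n) = ((2 * j + 1 : ℕ) : Fin n) := hEq
      have := congrArg Fin.val hEq2
      rw [h1, h2] at this
      omega
    rw [Set.ncard_image_of_injOn hinj, ← Finset.coe_Iio, Set.ncard_coe_finset, Nat.card_Iio]
  · rintro v ⟨j, hj, rfl⟩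
    simp only [Set.mem_Iio] at hj
    have h1 : ((2 * j + 1 : ℕ) : Fin n).val = 2 * j + 1 := Fin.val_cast_of_lt (by omega)
    have hempty : {u | u ∈ (fun j : ℕ => ((2 * j + 1 : ℕ) : Fin n)) '' Set.Iio ((n - 2 + 1) / 2)
        ∧ (pathGraph n).Adj ((2 * j + 1 : ℕ) : Fin n) u} = ∅ := by
      ext u
      simp only [Set.mem_setOf_eq, Set.mem_empty_iff_false, iff_false, not_and]
      rintro ⟨j', hj', rfl⟩
      simp only [Set.mem_Iio] at hj'
      have h2 : ((2 * j' + 1 : ℕ) : Fin n).val = 2 * j' + 1 := Fin.val_cast_of_lt (by omega)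
      rw [pathGraph_adj, h1, h2]
      omega
    rw [hempty, Set.ncard_empty]
  · rintro u ⟨i, hi, rfl⟩ v ⟨j, hj, rfl⟩
    simp only [Set.mem_Iio] at hi hj
    have h1 : ((2 * i + 1 : ℕ) : Fin n).val = 2 * i + 1 := Fin.val_cast_of_lt (by omega)
    have h2 : ((2 * j + 1 : ℕ) : Fin n).val = 2 * j + 1 := Fin.val_cast_of_lt (by omega)
    rw [degN_mid hn _ (by rw [h1]; omega), degN_mid hn _ (by rw [h2]; omega)]

lemma ex1 {n : ℕ} (hn : 5 ≤ n) : ∃ S : Set (Fin n), S.ncard = n - 2 - (n - 2) / 3 ∧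
    IsKIndepSet (pathGraph n) 1 S ∧ IsRegularSet (pathGraph n) S := by
  refine ⟨{v : Fin n | 1 ≤ v.val ∧ v.val ≤ n - 2 ∧ v.val % 3 ≠ 0}, ?_, ?_, ?_⟩
  · have himg : Fin.val '' {v : Fin n | 1 ≤ v.val ∧ v.val ≤ n - 2 ∧ v.val % 3 ≠ 0} =
        ↑((Finset.Icc 1 (n - 2)).filter (fun m => ¬ 3 ∣ m)) := by
      ext m
      simp only [Set.mem_image, Set.mem_setOf_eq, Finset.coe_filter, Finset.mem_Icc,
        Set.mem_setOf_eq]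
      constructor
      · rintro ⟨v, ⟨a, b, c⟩, rfl⟩; exact ⟨⟨a, b⟩, by omega⟩
      · rintro ⟨⟨a, b⟩, c⟩
        refine ⟨⟨m, by omega⟩, ?_, rfl⟩
        show 1 ≤ m ∧ m ≤ n - 2 ∧ m % 3 ≠ 0
        omega
    rw [← ncard_val_image, himg, Set.ncard_coe_finset]
    have hmult : ((Finset.Icc 1 (n - 2)).filter (fun m => 3 ∣ m)).card = (n - 2) / 3 := by
      have hset : (Finset.Icc 1 (n - 2)).filter (fun m => 3 ∣ m) =
          (Finset.range (n - 2) |>.filter (fun e => 3 ∣ e + 1)).image (· + 1) := by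
        ext m
        simp only [Finset.mem_filter, Finset.mem_Icc, Finset.mem_image, Finset.mem_range]
        constructor
        · rintro ⟨⟨a, b⟩, c⟩; exact ⟨m - 1, ⟨by omega, by omega⟩, by omega⟩
        · rintro ⟨e, ⟨a, b⟩, rfl⟩; omega
      rw [hset, Finset.card_image_of_injective _ (add_left_injective 1), Nat.card_multiples]
    have htot := Finset.card_filter_add_card_filter_not
      (s := Finset.Icc 1 (n - 2)) (p := fun m => 3 ∣ m)
    rw [Nat.card_Icc] at htot
    omega
  · rintro v ⟨hv1, hv2, hv3⟩
    have hone : {u | u ∈ {v : Fin n | 1 ≤ v.val ∧ v.val ≤ n - 2 ∧ v.val % 3 ≠ 0}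
        ∧ (pathGraph n).Adj v u}.ncard ≤ 1 := by
      rw [Set.ncard_le_one (Set.toFinite _)]
      rintro a ⟨⟨ha1, ha2, ha3⟩, haadj⟩ b ⟨⟨hb1, hb2, hb3⟩, hbadj⟩
      rw [pathGraph_adj] at haadj hbadj
      exact Fin.ext (by omega)
    exact hone
  · rintro u ⟨hu1, hu2, _⟩ v ⟨hv1, hv2, _⟩
    rw [degN_mid hn _ (by omega), degN_mid hn _ (by omega)]

lemma exk {n : ℕ} (hn : 5 ≤ n) : ∃ S : Set (Fin n), S.ncard = n - 2 ∧
    (∀ k, 2 ≤ k → IsKIndepSet (pathGraph n) k S) ∧ IsRegularSet (pathGraph n) S := by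
  refine ⟨{v : Fin n | 0 < v.val ∧ v.val < n - 1}, ncard_interior hn, ?_, ?_⟩
  · intro k hk v hv
    have hsub : {u | u ∈ {v : Fin n | 0 < v.val ∧ v.val < n - 1} ∧ (pathGraph n).Adj v u} ⊆
        {u | (pathGraph n).Adj v u} := fun u hu => hu.2
    have hle := Set.ncard_le_ncard hsub (Set.toFinite _)
    have hd : {u : Fin n | (pathGraph n).Adj v u}.ncard = 2 := degN_mid hn v hv
    omega
  · rintro u hu v hv
    rw [degN_mid hn _ hu, degN_mid hn _ hv]

theorem stmt_3 (n : ℕ) (hn : 5 ≤ n) :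
    regKIndepNum (pathGraph n) 0 = (n - 2 + 1) / 2 ∧
    regKIndepNum (pathGraph n) 1 = n - 2 - (n - 2) / 3 ∧
    ∀ k : ℕ, 2 ≤ k → regKIndepNum (pathGraph n) k = n - 2 := by
  refine ⟨?_, ?_, ?_⟩
  · apply regnum_eq _ _ _ (ex0 hn)
    intro S hi hr
    rcases dichotomy hn S hr with h | h
    · omega
    · exact ub0 hn S hi h
  · apply regnum_eq _ _ _ (ex1 hn)
    intro S hi hr
    rcases dichotomy hn S hr with h | h
    · omega
    · exact ub1 hn S hi h
  · intro k hk
    obtain ⟨S, hc, hik, hrg⟩ := exk hn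
    apply regnum_eq _ _ _ ⟨S, hc, hik k hk, hrg⟩
    intro S hi hr
    rcases dichotomy hn S hr with h | h
    · omega
    · calc S.ncard ≤ {v : Fin n | 0 < v.val ∧ v.val < n - 1}.ncard :=
            Set.ncard_le_ncard (fun v hv => h v hv) (Set.toFinite _)
        _ = n - 2 := ncard_interior hn
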